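/- Σ_{n=0}^∞ (213125n⁴ - 278000n³ + 139975n² - 26800n + 1596) / C(10n, 5n) = 1120·π·√3/81 + 1728, where the series converges absolutely. -/

import Mathlib

open Real

namespace Stmt12Aux

open Filter MeasureTheory intervalIntegral Set

noncomputable def c (m : ℕ) : ℝ := (Nat.centralBinom m : ℝ)

lemma c_pos (m : ℕ) : 0 < c m := by
  simp only [c]
  exact_mod_cast Nat.centralBinom_pos m

lemma c_ne (m : ℕ) : c m ≠ 0 := (c_pos m).ne'

lemma c_succ (m : ℕ) : c (m + 1) = 2 * (2 * (m : ℝ) + 1) * c m / ((m : ℝ) + 1) := by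
  have h := Nat.succ_mul_centralBinom_succ m
  have h' : ((m : ℝ) + 1) * c (m + 1) = 2 * (2 * (m : ℝ) + 1) * c m := by
    simp only [c]
    exact_mod_cast congrArg (fun x : ℕ => (x : ℝ)) h
  field_simp [show ((m : ℝ) + 1) ≠ 0 by positivity] at h' ⊢
  linarith [h']

lemma four_pow_le (m : ℕ) : (4 : ℝ) ^ m ≤ (2 * (m : ℝ) + 2) * c m := by
  rcases Nat.eq_zero_or_pos m with h | h
  · subst h; simp [c, Nat.centralBinom]
  · have h1 : 4 ^ m ≤ 2 * m * Nat.centralBinom m :=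
      Nat.four_pow_le_two_mul_self_mul_centralBinom m h
    have h2 : (4 : ℝ) ^ m ≤ 2 * (m : ℝ) * c m := by
      simp only [c]; exact_mod_cast h1
    nlinarith [c_pos m]

lemma inv_c_le (m : ℕ) : 1 / c m ≤ (2 * (m : ℝ) + 2) * (1 / 4 : ℝ) ^ m := by
  have hc := c_pos m
  have hp : (0 : ℝ) < 4 ^ m := by positivity
  have key : 1 / c m ≤ (2 * (m : ℝ) + 2) / 4 ^ m := by
    rw [div_le_div_iff₀ hc hp]
    nlinarith [four_pow_le m]
  calc 1 / c m ≤ (2 * (m : ℝ) + 2) / 4 ^ m := key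
    _ = (2 * (m : ℝ) + 2) * (1 / 4 : ℝ) ^ m := by
        rw [div_pow, one_pow, div_eq_mul_inv, div_eq_mul_inv, one_mul]

/-- summability of (deg ≤ 5 polynomial) * (1/4)^n -/
lemma sumq (a b c' d e f : ℝ) :
    Summable (fun n : ℕ => (a * (n : ℝ) ^ 5 + b * (n : ℝ) ^ 4 + c' * (n : ℝ) ^ 3 +
      d * (n : ℝ) ^ 2 + e * (n : ℝ) + f) * (1 / 4 : ℝ) ^ n) := by
  have hr : ‖(1 / 4 : ℝ)‖ < 1 := by
    rw [Real.norm_eq_abs, abs_of_nonneg] <;> norm_num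
  have S : ∀ k : ℕ, Summable (fun n : ℕ => (n : ℝ) ^ k * (1 / 4 : ℝ) ^ n) :=
    fun k => summable_pow_mul_geometric_of_norm_lt_one k hr
  have T := ((((((S 5).mul_left a).add ((S 4).mul_left b)).add ((S 3).mul_left c')).add
      ((S 2).mul_left d)).add ((S 1).mul_left e)).add ((S 0).mul_left f)
  exact T.congr fun n => by push_cast; ring

lemma telescope {f g : ℕ → ℝ} (h : ∀ n, f n = g n - g (n + 1)) (hf : Summable f)
    (hg : Tendsto g atTop (nhds 0)) : HasSum f (g 0) := by
  rw [hf.hasSum_iff_tendsto_nat]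
  have h2 : ∀ n, ∑ i ∈ Finset.range n, f i = g 0 - g n := by
    intro n
    simp only [h]
    exact Finset.sum_range_sub' g n
  simp only [h2]
  simpa using tendsto_const_nhds.sub hg

noncomputable def B (m : ℕ) : ℝ := (-11840 / 3 * (m : ℝ) + 12400 / 3) / c m

noncomputable def Hh (n : ℕ) : ℝ :=
  (640000 / 3 * (n : ℝ) ^ 4 - 832000 / 3 * (n : ℝ) ^ 3 + 140800 * (n : ℝ) ^ 2 - 1152) / c (5 * n)

noncomputable def A (n : ℕ) : ℝ :=
  (213125 * (n : ℝ) ^ 4 - 278000 * (n : ℝ) ^ 3 + 139975 * (n : ℝ) ^ 2 -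
    26800 * (n : ℝ) + 1596) / c (5 * n)

lemma key (n : ℕ) :
    A n = (B (5 * n) + B (5 * n + 1) + B (5 * n + 2) + B (5 * n + 3) + B (5 * n + 4)) +
      (Hh n - Hh (n + 1)) := by
  have h5 : 5 * (n + 1) = 5 * n + 4 + 1 := by ring
  have h4 : 5 * n + 4 = 5 * n + 3 + 1 := rfl
  have h3 : 5 * n + 3 = 5 * n + 2 + 1 := rfl
  have h2 : 5 * n + 2 = 5 * n + 1 + 1 := rfl
  have h1 : 5 * n + 1 = 5 * n + 1 := rfl
  simp only [A, B, Hh, h5, c_succ, h4, h3, h2]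
  have hc := c_ne (5 * n)
  push_cast
  have d1 : (5 : ℝ) * n + 1 ≠ 0 := by positivity
  have d2 : (5 : ℝ) * n + 1 + 1 ≠ 0 := by positivity
  have d3 : (5 : ℝ) * n + 1 + 1 + 1 ≠ 0 := by positivity
  have d4 : (5 : ℝ) * n + 1 + 1 + 1 + 1 ≠ 0 := by positivity
  have d5 : (5 : ℝ) * n + 4 + 1 ≠ 0 := by positivity
  field_simp
  ring

lemma J_step (a b : ℕ) :
    ∫ x in (0:ℝ)..1, x ^ a * (1 - x) ^ (b + 1) =
      ((b : ℝ) + 1) / ((a : ℝ) + 1) * ∫ x in (0:ℝ)..1, x ^ (a + 1) * (1 - x) ^ b := by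
  have ha : ((a : ℝ) + 1) ≠ 0 := by positivity
  have hu : ∀ x ∈ Set.uIcc (0:ℝ) 1,
      HasDerivAt (fun y : ℝ => (1 - y) ^ (b + 1)) (-(((b : ℝ) + 1) * (1 - x) ^ b)) x := by
    intro x _
    have h1 : HasDerivAt (fun y : ℝ => 1 - y) (-1) x := by
      simpa using (hasDerivAt_id x).const_sub 1
    have h2 := (hasDerivAt_pow (b + 1) (1 - x)).comp x h1
    refine h2.congr_deriv ?_
    push_cast
    simp
  have hv : ∀ x ∈ Set.uIcc (0:ℝ) 1,
      HasDerivAt (fun y : ℝ => y ^ (a + 1) / ((a : ℝ) + 1)) ((x : ℝ) ^ a) x := by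
    intro x _
    have h2 := (hasDerivAt_pow (a + 1) x).div_const ((a : ℝ) + 1)
    refine h2.congr_deriv ?_
    push_cast
    field_simp
  have H := intervalIntegral.integral_mul_deriv_eq_deriv_mul hu hv
    (Continuous.intervalIntegrable (by continuity) _ _)
    (Continuous.intervalIntegrable (by continuity) _ _)
  have e1 : (∫ x in (0:ℝ)..1, x ^ a * (1 - x) ^ (b + 1)) =
      ∫ x in (0:ℝ)..1, (1 - x) ^ (b + 1) * x ^ a :=
    intervalIntegral.integral_congr fun x _ => mul_comm _ _
  rw [e1, H]
  have e2 : (fun x : ℝ => -(((b : ℝ) + 1) * (1 - x) ^ b) * (x ^ (a + 1) / ((a : ℝ) + 1))) =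
      fun x : ℝ => (-(((b : ℝ) + 1) / ((a : ℝ) + 1))) * (x ^ (a + 1) * (1 - x) ^ b) := by
    funext x
    field_simp
  rw [show (∫ x in (0:ℝ)..1, -(((b:ℝ) + 1) * (1 - x) ^ b) * (x ^ (a + 1) / ((a:ℝ) + 1))) =
      ∫ x in (0:ℝ)..1, (-(((b:ℝ) + 1) / ((a:ℝ) + 1))) * (x ^ (a + 1) * (1 - x) ^ b) from by rw [e2]]
  rw [intervalIntegral.integral_const_mul]
  norm_num

lemma J_val : ∀ (b a : ℕ), ∫ x in (0:ℝ)..1, x ^ a * (1 - x) ^ b =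
    (Nat.factorial a * Nat.factorial b : ℝ) / (Nat.factorial (a + b + 1)) := by
  intro b
  induction b with
  | zero =>
    intro a
    simp only [pow_zero, mul_one, Nat.factorial_zero, Nat.cast_one]
    rw [integral_pow]
    rw [show a + 0 + 1 = a + 1 from rfl, Nat.factorial_succ]
    push_cast
    have : ((a : ℝ) + 1) ≠ 0 := by positivity
    have h2 : (Nat.factorial a : ℝ) ≠ 0 := by
      exact_mod_cast Nat.factorial_ne_zero a
    field_simp
    simp
  | succ b ih =>
    intro a
    rw [J_step a b, ih (a + 1)]
    have h1 : (Nat.factorial a : ℝ) ≠ 0 := by exact_mod_cast Nat.factorial_ne_zero a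
    have h2 : (Nat.factorial b : ℝ) ≠ 0 := by exact_mod_cast Nat.factorial_ne_zero b
    have h3 : (Nat.factorial (a + 1 + b + 1) : ℝ) ≠ 0 := by
      exact_mod_cast Nat.factorial_ne_zero _
    have h4 : (Nat.factorial (a + (b + 1) + 1) : ℝ) ≠ 0 := by
      exact_mod_cast Nat.factorial_ne_zero _
    have e1 : a + (b + 1) + 1 = (a + 1 + b) + 1 := by omega
    have e2 : a + 1 + b + 1 = (a + 1 + b) + 1 := by omega
    rw [e1, e2] at *
    rw [Nat.factorial_succ a, Nat.factorial_succ b]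
    push_cast
    have ha : ((a : ℝ) + 1) ≠ 0 := by positivity
    field_simp

lemma J_self (m : ℕ) :
    ∫ x in (0:ℝ)..1, x ^ m * (1 - x) ^ m = 1 / ((2 * (m : ℝ) + 1) * c m) := by
  rw [J_val m m]
  have h1 : Nat.centralBinom m * (m.factorial * m.factorial) = (2 * m).factorial := by
    rw [Nat.centralBinom_eq_two_mul_choose]
    have := Nat.choose_mul_factorial_mul_factorial (show m ≤ 2 * m by omega)
    rw [show 2 * m - m = m by omega] at this
    rw [← this]
    ring
  have e1 : m + m + 1 = 2 * m + 1 := by omega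
  rw [e1]
  have hn : (2 * m + 1).factorial = (2 * m + 1) * (Nat.centralBinom m * (m.factorial * m.factorial)) := by
    rw [Nat.factorial_succ (2 * m), h1]
  rw [hn]
  have hf : (m.factorial : ℝ) ≠ 0 := by exact_mod_cast Nat.factorial_ne_zero m
  have hc : c m ≠ 0 := c_ne m
  have hcb : (Nat.centralBinom m : ℝ) = c m := rfl
  push_cast
  rw [hcb]
  have h2 : (2 * (m : ℝ) + 1) ≠ 0 := by positivity
  field_simp

lemma pointwise {t : ℝ} (h0 : 0 ≤ t) (h1 : t ≤ 1 / 4) :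
    HasSum (fun m : ℕ => (-11840 / 3 * (m : ℝ) + 12400 / 3) * (2 * (m : ℝ) + 1) * t ^ m)
      ((12400 / 3 - 11840 * t - 8080 * t ^ 2) / (1 - t) ^ 3) := by
  have hu0 : (0 : ℝ) < 1 - t := by linarith
  have hune : (1 - t) ≠ 0 := hu0.ne'
  set u : ℝ := 1 - t with hu
  set Ac : ℝ := (-23680 / 3) * u ^ 2 / u ^ 3 with hA
  set Bc : ℝ := (4320 * u ^ 2 - (47360 / 3) * t * u) / u ^ 3 with hB
  set Cc : ℝ := ((12400 / 3) * u ^ 2 + t * (-23680 / 3) * u + t * (4320 * u - (47360 / 3) * t)) / u ^ 3 with hC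
  set g : ℕ → ℝ := fun m => (Ac * (m : ℝ) ^ 2 + Bc * (m : ℝ) + Cc) * t ^ m with hg
  have hfg : ∀ m : ℕ, (-11840 / 3 * (m : ℝ) + 12400 / 3) * (2 * (m : ℝ) + 1) * t ^ m
      = g m - g (m + 1) := by
    intro m
    have hcoef : (-11840 / 3 * (m : ℝ) + 12400 / 3) * (2 * (m : ℝ) + 1) =
        (Ac * (m : ℝ) ^ 2 + Bc * (m : ℝ) + Cc) -
          t * (Ac * ((m : ℝ) + 1) ^ 2 + Bc * ((m : ℝ) + 1) + Cc) := by
      rw [hA, hB, hC]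
      field_simp
      ring
    have : g (m + 1) = (Ac * ((m : ℝ) + 1) ^ 2 + Bc * ((m : ℝ) + 1) + Cc) * (t ^ m * t) := by
      rw [hg]
      push_cast
      rw [pow_succ]
      ring
    rw [this, hg]
    calc (-11840 / 3 * (m : ℝ) + 12400 / 3) * (2 * (m : ℝ) + 1) * t ^ m
        = ((Ac * (m : ℝ) ^ 2 + Bc * (m : ℝ) + Cc) -
            t * (Ac * ((m : ℝ) + 1) ^ 2 + Bc * ((m : ℝ) + 1) + Cc)) * t ^ m := by rw [hcoef]
      _ = _ := by ring
  have hsumf : Summable (fun m : ℕ =>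
      (-11840 / 3 * (m : ℝ) + 12400 / 3) * (2 * (m : ℝ) + 1) * t ^ m) := by
    apply Summable.of_norm_bounded
      (g := fun m : ℕ => (23680 / 3 * (m : ℝ) ^ 2 + 36640 / 3 * (m : ℝ) + 12400 / 3) * (1 / 4 : ℝ) ^ m)
    · exact (sumq 0 0 0 (23680 / 3) (36640 / 3) (12400 / 3)).congr fun n => by push_cast; ring
    · intro m
      have hmn : (0 : ℝ) ≤ (m : ℝ) := Nat.cast_nonneg m
      have htp : (0 : ℝ) ≤ t ^ m := pow_nonneg h0 m
      have hts : t ^ m ≤ (1 / 4 : ℝ) ^ m := pow_le_pow_left₀ h0 h1 m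
      rw [Real.norm_eq_abs, abs_mul, abs_of_nonneg htp]
      have habs : |(-11840 / 3 * (m : ℝ) + 12400 / 3) * (2 * (m : ℝ) + 1)| ≤
          23680 / 3 * (m : ℝ) ^ 2 + 36640 / 3 * (m : ℝ) + 12400 / 3 := by
        rw [abs_mul]
        have e1 : |(-11840 / 3 * (m : ℝ) + 12400 / 3)| ≤ 11840 / 3 * (m : ℝ) + 12400 / 3 :=
          abs_le.mpr ⟨by nlinarith, by nlinarith⟩
        have e2 : |(2 * (m : ℝ) + 1)| = 2 * (m : ℝ) + 1 := abs_of_nonneg (by linarith)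
        rw [e2]
        nlinarith [abs_nonneg (-11840 / 3 * (m : ℝ) + 12400 / 3)]
      calc |(-11840 / 3 * (m : ℝ) + 12400 / 3) * (2 * (m : ℝ) + 1)| * t ^ m
          ≤ (23680 / 3 * (m : ℝ) ^ 2 + 36640 / 3 * (m : ℝ) + 12400 / 3) * (1 / 4 : ℝ) ^ m := by
            apply mul_le_mul habs hts htp
            positivity
        _ = _ := rfl
  have hsumg : Summable g := by
    apply Summable.of_norm_bounded
      (g := fun m : ℕ => ((|Ac| + |Bc| + |Cc|) * (m : ℝ) ^ 2 + (2 * (|Ac| + |Bc| + |Cc|)) * (m : ℝ) +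
        (|Ac| + |Bc| + |Cc|)) * (1 / 4 : ℝ) ^ m)
    · exact (sumq 0 0 0 (|Ac| + |Bc| + |Cc|) (2 * (|Ac| + |Bc| + |Cc|)) (|Ac| + |Bc| + |Cc|)).congr
        fun n => by push_cast; ring
    · intro m
      have hmn : (0 : ℝ) ≤ (m : ℝ) := Nat.cast_nonneg m
      have htp : (0 : ℝ) ≤ t ^ m := pow_nonneg h0 m
      have hts : t ^ m ≤ (1 / 4 : ℝ) ^ m := pow_le_pow_left₀ h0 h1 m
      rw [hg, Real.norm_eq_abs, abs_mul, abs_of_nonneg htp]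
      have h1' : |Ac * (m : ℝ) ^ 2 + Bc * (m : ℝ) + Cc| ≤
          |Ac| * (m : ℝ) ^ 2 + |Bc| * (m : ℝ) + |Cc| := by
        calc |Ac * (m : ℝ) ^ 2 + Bc * (m : ℝ) + Cc| ≤ |Ac * (m : ℝ) ^ 2 + Bc * (m : ℝ)| + |Cc| :=
              abs_add_le _ _
          _ ≤ |Ac * (m : ℝ) ^ 2| + |Bc * (m : ℝ)| + |Cc| := by
              linarith [abs_add_le (Ac * (m : ℝ) ^ 2) (Bc * (m : ℝ))]
          _ = |Ac| * (m : ℝ) ^ 2 + |Bc| * (m : ℝ) + |Cc| := by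
              rw [abs_mul, abs_mul, abs_of_nonneg (by positivity : (0:ℝ) ≤ (m : ℝ) ^ 2),
                abs_of_nonneg hmn]
      have hcoef : |Ac| * (m : ℝ) ^ 2 + |Bc| * (m : ℝ) + |Cc| ≤
          (|Ac| + |Bc| + |Cc|) * (m : ℝ) ^ 2 + (2 * (|Ac| + |Bc| + |Cc|)) * (m : ℝ) +
            (|Ac| + |Bc| + |Cc|) := by
        nlinarith [abs_nonneg Ac, abs_nonneg Bc, abs_nonneg Cc, sq_nonneg ((m : ℝ) - 1)]
      calc |Ac * (m : ℝ) ^ 2 + Bc * (m : ℝ) + Cc| * t ^ m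
          ≤ ((|Ac| + |Bc| + |Cc|) * (m : ℝ) ^ 2 + (2 * (|Ac| + |Bc| + |Cc|)) * (m : ℝ) +
              (|Ac| + |Bc| + |Cc|)) * (1 / 4 : ℝ) ^ m := by
            apply mul_le_mul (le_trans h1' hcoef) hts htp
            positivity
        _ = _ := rfl
  have hgz : Tendsto g atTop (nhds 0) := hsumg.tendsto_atTop_zero
  have H := telescope hfg hsumf hgz
  have hg0 : g 0 = (12400 / 3 - 11840 * t - 8080 * t ^ 2) / (1 - t) ^ 3 := by
    rw [hg]
    push_cast
    rw [hC, hB, hA, ← hu]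
    field_simp
    ring
  rwa [hg0] at H

noncomputable def FF (x : ℝ) : ℝ :=
  (23680 / 9 - 47360 / 9 * x) / (x ^ 2 - x + 1) ^ 2 +
    (73280 / 9 * x - 36640 / 9) / (x ^ 2 - x + 1) +
    (1120 * Real.sqrt 3 / 27) * Real.arctan ((2 * x - 1) / Real.sqrt 3)

lemma sqrt3_pos : (0 : ℝ) < Real.sqrt 3 := Real.sqrt_pos.mpr (by norm_num)

lemma sqrt3_sq : Real.sqrt 3 ^ 2 = 3 := Real.sq_sqrt (by norm_num)

lemma q_pos (x : ℝ) : (0 : ℝ) < x ^ 2 - x + 1 := by nlinarith [sq_nonneg (2 * x - 1)]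

lemma FF_deriv (x : ℝ) :
    HasDerivAt FF
      ((12400 / 3 - 11840 * (x * (1 - x)) - 8080 * (x * (1 - x)) ^ 2) / (1 - x * (1 - x)) ^ 3)
      x := by
  have hq := q_pos x
  have hqne : (x ^ 2 - x + 1) ≠ 0 := hq.ne'
  have hs0 : Real.sqrt 3 ≠ 0 := sqrt3_pos.ne'
  have hu : HasDerivAt (fun y : ℝ => y ^ 2 - y + 1) (2 * x - 1) x := by
    have h := ((hasDerivAt_pow 2 x).sub (hasDerivAt_id x)).add_const 1
    refine h.congr_deriv ?_
    push_cast
    ring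
  have h1 : HasDerivAt (fun y : ℝ => (23680 / 9 - 47360 / 9 * y) / (y ^ 2 - y + 1) ^ 2)
      (((-47360 / 9) * (x ^ 2 - x + 1) ^ 2 -
        (23680 / 9 - 47360 / 9 * x) * (2 * (x ^ 2 - x + 1) ^ 1 * (2 * x - 1))) /
          ((x ^ 2 - x + 1) ^ 2) ^ 2) x := by
    have hnum : HasDerivAt (fun y : ℝ => 23680 / 9 - 47360 / 9 * y) (-47360 / 9) x := by
      have h := (hasDerivAt_id x).const_mul (47360 / 9 : ℝ)
      have h2 := h.const_sub (23680 / 9 : ℝ)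
      refine h2.congr_deriv ?_
      ring
    exact hnum.div (hu.pow 2) (by positivity)
  have h2 : HasDerivAt (fun y : ℝ => (73280 / 9 * y - 36640 / 9) / (y ^ 2 - y + 1))
      ((73280 / 9 * (x ^ 2 - x + 1) - (73280 / 9 * x - 36640 / 9) * (2 * x - 1)) /
        (x ^ 2 - x + 1) ^ 2) x := by
    have hnum : HasDerivAt (fun y : ℝ => 73280 / 9 * y - 36640 / 9) (73280 / 9) x := by
      have h := ((hasDerivAt_id x).const_mul (73280 / 9 : ℝ)).sub_const (36640 / 9 : ℝ)
      refine h.congr_deriv ?_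
      ring
    exact hnum.div hu hqne
  have harc : HasDerivAt (fun y : ℝ => Real.arctan ((2 * y - 1) / Real.sqrt 3))
      (1 / (1 + ((2 * x - 1) / Real.sqrt 3) ^ 2) * (2 / Real.sqrt 3)) x := by
    have hinner : HasDerivAt (fun y : ℝ => (2 * y - 1) / Real.sqrt 3) (2 / Real.sqrt 3) x := by
      have h := (((hasDerivAt_id x).const_mul (2 : ℝ)).sub_const 1).div_const (Real.sqrt 3)
      refine h.congr_deriv ?_
      ring
    exact hinner.arctan
  have h3 : HasDerivAt (fun y : ℝ => (1120 * Real.sqrt 3 / 27) *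
      Real.arctan ((2 * y - 1) / Real.sqrt 3)) (560 / (9 * (x ^ 2 - x + 1))) x := by
    have h := harc.const_mul (1120 * Real.sqrt 3 / 27)
    refine h.congr_deriv ?_
    have hpos : (0 : ℝ) < 1 + ((2 * x - 1) / Real.sqrt 3) ^ 2 := by positivity
    have key : 1 + ((2 * x - 1) / Real.sqrt 3) ^ 2 = (3 + (2 * x - 1) ^ 2) / 3 := by
      rw [div_pow, sqrt3_sq]
      field_simp
    rw [key]
    have h33 : (3 + (2 * x - 1) ^ 2) ≠ 0 := by positivity
    field_simp
    rw [eq_div_iff (by nlinarith [q_pos x] : (0:ℝ) < x * (x - 1) + 1).ne']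
    ring
  have total := (h1.add h2).add h3
  have hFF : FF = fun y : ℝ => ((23680 / 9 - 47360 / 9 * y) / (y ^ 2 - y + 1) ^ 2 +
      (73280 / 9 * y - 36640 / 9) / (y ^ 2 - y + 1)) +
      (1120 * Real.sqrt 3 / 27) * Real.arctan ((2 * y - 1) / Real.sqrt 3) := by
    funext y
    simp only [FF]
  rw [hFF]
  refine total.congr_deriv ?_
  have h1t : (1 - x * (1 - x)) = (x ^ 2 - x + 1) := by ring
  rw [h1t]
  field_simp
  ring

lemma Rcont : Continuous (fun x : ℝ =>
    (12400 / 3 - 11840 * (x * (1 - x)) - 8080 * (x * (1 - x)) ^ 2) / (1 - x * (1 - x)) ^ 3) := by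
  apply Continuous.div (by continuity) (by continuity)
  intro x
  have h : (0 : ℝ) < 1 - x * (1 - x) := by nlinarith [q_pos x]
  positivity

lemma integ : ∫ x in (0:ℝ)..1,
    (12400 / 3 - 11840 * (x * (1 - x)) - 8080 * (x * (1 - x)) ^ 2) / (1 - x * (1 - x)) ^ 3 =
    2880 + 1120 * Real.sqrt 3 * π / 81 := by
  rw [intervalIntegral.integral_eq_sub_of_hasDerivAt (fun x _ => FF_deriv x)
    (Rcont.intervalIntegrable 0 1)]
  have a1 : Real.arctan ((2 * (1:ℝ) - 1) / Real.sqrt 3) = π / 6 := by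
    have h1 : ((2 * (1:ℝ) - 1) / Real.sqrt 3) = Real.tan (π / 6) := by
      rw [Real.tan_pi_div_six]; norm_num
    rw [h1, Real.arctan_tan (by linarith [Real.pi_pos]) (by linarith [Real.pi_pos])]
  have a0 : Real.arctan ((2 * (0:ℝ) - 1) / Real.sqrt 3) = -(π / 6) := by
    have h1 : ((2 * (0:ℝ) - 1) / Real.sqrt 3) = -(1 / Real.sqrt 3) := by
      rw [show (2 * (0:ℝ) - 1) = -1 by norm_num, neg_div]
    rw [h1, Real.arctan_neg, ← Real.tan_pi_div_six,
      Real.arctan_tan (by linarith [Real.pi_pos]) (by linarith [Real.pi_pos])]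
  simp only [FF, a1, a0]
  norm_num
  ring

lemma sumBabs : Summable (fun m : ℕ => |(-11840 / 3 * (m : ℝ) + 12400 / 3)| / c m) := by
  apply Summable.of_norm_bounded
    (g := fun m : ℕ => (11840 / 3 * (m : ℝ) + 12400 / 3) * ((2 * (m : ℝ) + 2) * (1 / 4 : ℝ) ^ m))
  · exact (sumq 0 0 0 (23680 / 3) (48480 / 3) (24800 / 3)).congr fun n => by push_cast; ring
  · intro m
    have hm : (0 : ℝ) ≤ (m : ℝ) := Nat.cast_nonneg m
    have hc := c_pos m
    rw [Real.norm_eq_abs, abs_of_nonneg (by positivity)]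
    have e1 : |(-11840 / 3 * (m : ℝ) + 12400 / 3)| ≤ 11840 / 3 * (m : ℝ) + 12400 / 3 :=
      abs_le.mpr ⟨by nlinarith, by nlinarith⟩
    calc |(-11840 / 3 * (m : ℝ) + 12400 / 3)| / c m
        ≤ (11840 / 3 * (m : ℝ) + 12400 / 3) / c m := by gcongr
      _ = (11840 / 3 * (m : ℝ) + 12400 / 3) * (1 / c m) := by ring
      _ ≤ (11840 / 3 * (m : ℝ) + 12400 / 3) * ((2 * (m : ℝ) + 2) * (1 / 4 : ℝ) ^ m) :=
          mul_le_mul_of_nonneg_left (inv_c_le m) (by positivity)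

lemma sumHh : Summable Hh := by
  apply Summable.of_norm_bounded
    (g := fun n : ℕ => (640000 / 3 * (n : ℝ) ^ 4 + 832000 / 3 * (n : ℝ) ^ 3 +
      140800 * (n : ℝ) ^ 2 + 1152) * ((10 * (n : ℝ) + 2) * (1 / 4 : ℝ) ^ n))
  · exact (sumq (6400000 / 3) 3200000 (5888000 / 3) 281600 11520 2304).congr
      fun n => by push_cast; ring
  · intro n
    have hm : (0 : ℝ) ≤ (n : ℝ) := Nat.cast_nonneg n
    have hc := c_pos (5 * n)
    have hpow : ((1 : ℝ) / 4) ^ (5 * n) ≤ (1 / 4 : ℝ) ^ n :=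
      pow_le_pow_of_le_one (by norm_num) (by norm_num) (by omega)
    have h1 : 1 / c (5 * n) ≤ (10 * (n : ℝ) + 2) * (1 / 4 : ℝ) ^ n := by
      calc 1 / c (5 * n) ≤ (2 * ((5 * n : ℕ) : ℝ) + 2) * (1 / 4 : ℝ) ^ (5 * n) := inv_c_le (5 * n)
        _ = (10 * (n : ℝ) + 2) * (1 / 4 : ℝ) ^ (5 * n) := by push_cast; ring
        _ ≤ (10 * (n : ℝ) + 2) * (1 / 4 : ℝ) ^ n :=
            mul_le_mul_of_nonneg_left hpow (by positivity)
    have habs : |640000 / 3 * (n : ℝ) ^ 4 - 832000 / 3 * (n : ℝ) ^ 3 + 140800 * (n : ℝ) ^ 2 - 1152|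
        ≤ 640000 / 3 * (n : ℝ) ^ 4 + 832000 / 3 * (n : ℝ) ^ 3 + 140800 * (n : ℝ) ^ 2 + 1152 :=
      abs_le.mpr ⟨by nlinarith, by nlinarith⟩
    rw [Real.norm_eq_abs, Hh, abs_div, abs_of_pos hc]
    calc |640000 / 3 * (n : ℝ) ^ 4 - 832000 / 3 * (n : ℝ) ^ 3 + 140800 * (n : ℝ) ^ 2 - 1152| / c (5 * n)
        = |640000 / 3 * (n : ℝ) ^ 4 - 832000 / 3 * (n : ℝ) ^ 3 + 140800 * (n : ℝ) ^ 2 - 1152| *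
            (1 / c (5 * n)) := by ring
      _ ≤ (640000 / 3 * (n : ℝ) ^ 4 + 832000 / 3 * (n : ℝ) ^ 3 + 140800 * (n : ℝ) ^ 2 + 1152) *
            ((10 * (n : ℝ) + 2) * (1 / 4 : ℝ) ^ n) := by
          apply mul_le_mul habs h1 (by positivity) (by positivity)

lemma hasSumB : HasSum B (2880 + 1120 * Real.sqrt 3 * π / 81) := by
  set μ := volume.restrict (Set.Ioc (0:ℝ) 1) with hμ
  set f : ℕ → ℝ → ℝ :=
    fun m x => (-11840 / 3 * (m : ℝ) + 12400 / 3) * (2 * (m : ℝ) + 1) * (x * (1 - x)) ^ m with hf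
  have hcont : ∀ m, Continuous (f m) := fun m => by
    simp only [hf]; continuity
  have hint : ∀ m, Integrable (f m) μ := fun m => (hcont m).integrableOn_Ioc
  have hval : ∀ m, ∫ x, f m x ∂μ = B m := by
    intro m
    have h1 : ∫ x, f m x ∂μ = ∫ x in (0:ℝ)..1, f m x :=
      (intervalIntegral.integral_of_le zero_le_one).symm
    rw [h1]
    simp only [hf, mul_pow]
    rw [intervalIntegral.integral_const_mul, J_self m]
    simp only [B]
    have h3 : (2 * (m : ℝ) + 1) ≠ 0 := by positivity
    have hc := c_ne m
    field_simp
  have hnorm : ∀ m, ∫ x, ‖f m x‖ ∂μ = |(-11840 / 3 * (m : ℝ) + 12400 / 3)| / c m := by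
    intro m
    have hEq : Set.EqOn (fun x => ‖f m x‖)
        (fun x => |(-11840 / 3 * (m : ℝ) + 12400 / 3)| * (2 * (m : ℝ) + 1) * (x * (1 - x)) ^ m)
        (Set.Ioc (0:ℝ) 1) := by
      intro x hx
      simp only [hf, Real.norm_eq_abs, abs_mul]
      have hx1 : (0:ℝ) ≤ x * (1 - x) := mul_nonneg hx.1.le (by linarith [hx.2])
      rw [abs_of_nonneg (pow_nonneg hx1 m), abs_of_nonneg (by positivity : (0:ℝ) ≤ 2 * (m : ℝ) + 1)]
    rw [hμ, MeasureTheory.setIntegral_congr_fun measurableSet_Ioc hEq]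
    have h1 : ∫ x in Set.Ioc (0:ℝ) 1,
        |(-11840 / 3 * (m : ℝ) + 12400 / 3)| * (2 * (m : ℝ) + 1) * (x * (1 - x)) ^ m =
        ∫ x in (0:ℝ)..1,
        |(-11840 / 3 * (m : ℝ) + 12400 / 3)| * (2 * (m : ℝ) + 1) * (x * (1 - x)) ^ m :=
      (intervalIntegral.integral_of_le zero_le_one).symm
    rw [h1]
    simp only [mul_pow]
    rw [intervalIntegral.integral_const_mul, J_self m]
    have h3 : (2 * (m : ℝ) + 1) ≠ 0 := by positivity
    have hc := c_ne m
    field_simp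
  have hsum : Summable fun m => ∫ x, ‖f m x‖ ∂μ :=
    sumBabs.congr fun m => (hnorm m).symm
  have H := MeasureTheory.hasSum_integral_of_summable_integral_norm hint hsum
  have hfun : (∫ a, f · a ∂μ) = B := funext hval
  rw [hfun] at H
  have hRHS : ∫ a, (∑' m, f m a) ∂μ = 2880 + 1120 * Real.sqrt 3 * π / 81 := by
    have hEq2 : Set.EqOn (fun x => ∑' m, f m x)
        (fun x => (12400 / 3 - 11840 * (x * (1 - x)) - 8080 * (x * (1 - x)) ^ 2) /
          (1 - x * (1 - x)) ^ 3) (Set.Ioc (0:ℝ) 1) := by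
      intro x hx
      have h0 : (0:ℝ) ≤ x * (1 - x) := mul_nonneg hx.1.le (by linarith [hx.2])
      have h1 : x * (1 - x) ≤ 1 / 4 := by nlinarith [sq_nonneg (2 * x - 1)]
      exact (pointwise h0 h1).tsum_eq
    rw [hμ, MeasureTheory.setIntegral_congr_fun measurableSet_Ioc hEq2,
      ← intervalIntegral.integral_of_le zero_le_one, integ]
  rwa [hRHS] at H

lemma hasSumA : HasSum A (2880 + 1120 * Real.sqrt 3 * π / 81 + -1152) := by
  have h := (Equiv.hasSum_iff (Nat.divModEquiv 5).symm (f := B)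
    (a := 2880 + 1120 * Real.sqrt 3 * π / 81)).mpr hasSumB
  have hBe : HasSum (fun p : ℕ × Fin 5 => B (p.1 * 5 + (p.2 : ℕ)))
      (2880 + 1120 * Real.sqrt 3 * π / 81) := by
    have heq : (B ∘ ⇑(Nat.divModEquiv 5).symm) = fun p : ℕ × Fin 5 => B (p.1 * 5 + (p.2 : ℕ)) := by
      funext p
      simp [Nat.divModEquiv]
    rwa [heq] at h
  have hfib := hBe.prod_fiberwise (g := fun q => ∑ j : Fin 5, B (q * 5 + (j : ℕ)))
    (fun q => hasSum_fintype _)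
  have hHt : HasSum (fun n => Hh n - Hh (n + 1)) (Hh 0) :=
    telescope (fun n => rfl) (sumHh.sub ((summable_nat_add_iff 1).mpr sumHh))
      sumHh.tendsto_atTop_zero
  have hadd := hfib.add hHt
  have hH0 : Hh 0 = -1152 := by
    have hc0 : c (5 * 0) = 1 := by
      norm_num [c, Nat.centralBinom]
    simp only [Hh, hc0]
    norm_num
  rw [hH0] at hadd
  have hfun : (fun n : ℕ => (∑ j : Fin 5, B (n * 5 + (j : ℕ))) + (Hh n - Hh (n + 1))) = A := by
    funext n
    rw [Fin.sum_univ_five, key n]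
    have j0 : ((0 : Fin 5) : ℕ) = 0 := rfl
    have j1 : ((1 : Fin 5) : ℕ) = 1 := rfl
    have j2 : ((2 : Fin 5) : ℕ) = 2 := rfl
    have j3 : ((3 : Fin 5) : ℕ) = 3 := rfl
    have j4 : ((4 : Fin 5) : ℕ) = 4 := rfl
    have e0 : n * 5 = 5 * n := by ring
    rw [j0, j1, j2, j3, j4, e0, add_zero]
  rwa [hfun] at hadd

end Stmt12Aux

theorem stmt12 :
    Summable (fun n : ℕ =>
      |(213125 * (n : ℝ) ^ 4 - 278000 * (n : ℝ) ^ 3 + 139975 * (n : ℝ) ^ 2 -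
          26800 * (n : ℝ) + 1596) / (Nat.choose (10 * n) (5 * n) : ℝ)|) ∧
    ∑' n : ℕ,
        (213125 * (n : ℝ) ^ 4 - 278000 * (n : ℝ) ^ 3 + 139975 * (n : ℝ) ^ 2 -
            26800 * (n : ℝ) + 1596) / (Nat.choose (10 * n) (5 * n) : ℝ) =
      1120 * π * Real.sqrt 3 / 81 + 1728 := by
  have hchoose : ∀ n : ℕ, ((Nat.choose (10 * n) (5 * n) : ℕ) : ℝ) = Stmt12Aux.c (5 * n) := by
    intro n
    simp only [Stmt12Aux.c, Nat.centralBinom_eq_two_mul_choose]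
    rw [show 2 * (5 * n) = 10 * n by ring]
  have hfun : (fun n : ℕ =>
      (213125 * (n : ℝ) ^ 4 - 278000 * (n : ℝ) ^ 3 + 139975 * (n : ℝ) ^ 2 -
        26800 * (n : ℝ) + 1596) / (Nat.choose (10 * n) (5 * n) : ℝ)) = Stmt12Aux.A := by
    funext n
    rw [hchoose n]
    rfl
  constructor
  · have hs : Summable (fun n : ℕ =>
        (213125 * (n : ℝ) ^ 4 - 278000 * (n : ℝ) ^ 3 + 139975 * (n : ℝ) ^ 2 -
          26800 * (n : ℝ) + 1596) / (Nat.choose (10 * n) (5 * n) : ℝ)) := by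
      rw [hfun]
      exact Stmt12Aux.hasSumA.summable
    exact hs.abs
  · have ht : ∑' n : ℕ,
        (213125 * (n : ℝ) ^ 4 - 278000 * (n : ℝ) ^ 3 + 139975 * (n : ℝ) ^ 2 -
            26800 * (n : ℝ) + 1596) / (Nat.choose (10 * n) (5 * n) : ℝ) =
        2880 + 1120 * Real.sqrt 3 * π / 81 + -1152 := by
      rw [hfun]
      exact Stmt12Aux.hasSumA.tsum_eq
    rw [ht]
    ring
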